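/- The deletion N − {0,1,2,3,4,5} of the rank-4 matroid N is isomorphic to the non-Fano matroid F_7^-. -/

import Mathlib

def mLines : Set (Set (Fin 13)) :=
  {{0,3,9}, {0,4,7}, {0,5,6}, {8,9,10}, {7,10,11},
   {1,4,9}, {1,3,7}, {1,5,8}, {6,9,11}, {6,10,12},
   {2,5,9}, {2,3,6}, {2,4,8}, {7,9,12}, {8,11,12}}

def bigBlocks : Set (Set (Fin 13)) :=
  {{0,1,3,4,7,9,12}, {0,2,3,5,6,9,11}, {1,2,4,5,8,9,10}, {6,7,8,9,10,11,12},
   {0,3,8,9,10}, {1,4,6,9,11}, {2,5,7,9,12},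
   {0,4,5,6,7}, {1,2,3,6,7}, {0,1,5,6,8}, {2,3,4,6,8}, {0,2,4,7,8}, {1,3,5,7,8},
   {0,4,7,10,11}, {1,3,7,10,11}, {0,5,6,10,12}, {2,3,6,10,12}, {1,5,8,11,12},
   {2,4,8,11,12}, {0,8,11,12}, {1,6,10,12}, {2,7,10,11}, {3,8,11,12},
   {4,6,10,12}, {5,7,10,11}}

def IsN (N : Matroid (Fin 13)) : Prop :=
  N.E = Set.univ ∧ ∀ I : Set (Fin 13),
    N.Indep I ↔ I.encard ≤ 4 ∧ (∀ L ∈ mLines, ¬ L ⊆ I) ∧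
      ¬ ∃ Z ∈ bigBlocks, I ⊆ Z ∧ I.encard = 4

def nonFanoLines : Set (Set (Fin 7)) :=
  {{0,1,5}, {0,2,4}, {0,3,6}, {1,2,3}, {1,4,6}, {2,5,6}}

/-- An identification of `{0,…,6}` with `{6,…,12} ⊆ {0,…,12}`. -/
def emb : Fin 7 → Fin 13 := ![9, 10, 11, 7, 6, 8, 12]

lemma emb_inj : Function.Injective emb := by decide

lemma nonFano_encard {L : Set (Fin 7)} (hL : L ∈ nonFanoLines) : L.encard = 3 := by
  rcases hL with h|h|h|h|h|h <;> subst h <;>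
    rw [Set.encard_eq_three] <;> exact ⟨_, _, _, by decide, by decide, by decide, rfl⟩

lemma key {I : Set (Fin 7)} (hI : I.encard ≤ 3) (hIn : I ∉ nonFanoLines)
    {L : Set (Fin 7)} (hL : L ∈ nonFanoLines) : ¬ L ⊆ I := fun h => by
  have : L = I := I.toFinite.eq_of_subset_of_encard_le' h
    (hI.trans_eq (nonFano_encard hL).symm)
  exact hIn (this ▸ hL)

/-- The deletion `N − {0,1,2,3,4,5}` (i.e. the restriction of `N` to `{6,…,12}`)
is isomorphic to the non-Fano matroid `F₇⁻`, via the bijection `emb`. -/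
theorem deletion_isNonFano (N : Matroid (Fin 13)) (hN : IsN N) :
    Function.Injective emb ∧
    Set.range emb = N.E \ {0,1,2,3,4,5} ∧
    ∀ I : Set (Fin 7),
      (N.restrict (N.E \ {0,1,2,3,4,5})).Indep (emb '' I) ↔
        I.encard ≤ 3 ∧ I ∉ nonFanoLines := by
  obtain ⟨hE, hInd⟩ := hN
  have hrange : Set.range emb = Set.univ \ {0,1,2,3,4,5} := by
    simp only [Set.ext_iff]; decide
  refine ⟨emb_inj, by rw [hE, hrange], fun I => ?_⟩
  have hIcard : (emb '' I).encard = I.encard := emb_inj.encard_image I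
  have hsubE : emb '' I ⊆ Set.univ \ {0,1,2,3,4,5} :=
    hrange ▸ Set.image_subset_range emb I
  rw [Matroid.restrict_indep_iff, hInd, hE]
  constructor
  · rintro ⟨⟨h4, hlines, hblock⟩, -⟩
    have hb : emb '' I ⊆ ({6,7,8,9,10,11,12} : Set (Fin 13)) := by
      refine hsubE.trans fun x hx => ?_
      revert hx; revert x; decide
    have hne : (emb '' I).encard ≠ 4 := fun h =>
      hblock ⟨{6,7,8,9,10,11,12}, by simp [bigBlocks], hb, h⟩
    rw [hIcard] at h4 hne
    have h3 : I.encard ≤ 3 := by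
      classical
      rw [Set.encard_eq_coe_toFinset_card I] at h4 hne ⊢
      norm_cast at h4 hne ⊢; omega
    refine ⟨h3, fun hIn => ?_⟩
    have one : ∀ (j : Fin 7), j ∈ I → emb j ∈ emb '' I := fun j hj => ⟨j, hj, rfl⟩
    rcases hIn with h|h|h|h|h|h <;> subst h
    · refine hlines {8,9,10} (by simp [mLines]) fun x hx => ?_
      rcases hx with h|h|h
      · exact h ▸ one 5 (by simp)
      · exact h ▸ one 0 (by simp)
      · exact (Set.mem_singleton_iff.mp h) ▸ one 1 (by simp)
    · refine hlines {6,9,11} (by simp [mLines]) fun x hx => ?_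
      rcases hx with h|h|h
      · exact h ▸ one 4 (by simp)
      · exact h ▸ one 0 (by simp)
      · exact (Set.mem_singleton_iff.mp h) ▸ one 2 (by simp)
    · refine hlines {7,9,12} (by simp [mLines]) fun x hx => ?_
      rcases hx with h|h|h
      · exact h ▸ one 3 (by simp)
      · exact h ▸ one 0 (by simp)
      · exact (Set.mem_singleton_iff.mp h) ▸ one 6 (by simp)
    · refine hlines {7,10,11} (by simp [mLines]) fun x hx => ?_
      rcases hx with h|h|h
      · exact h ▸ one 3 (by simp)
      · exact h ▸ one 1 (by simp)
      · exact (Set.mem_singleton_iff.mp h) ▸ one 2 (by simp)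
    · refine hlines {6,10,12} (by simp [mLines]) fun x hx => ?_
      rcases hx with h|h|h
      · exact h ▸ one 4 (by simp)
      · exact h ▸ one 1 (by simp)
      · exact (Set.mem_singleton_iff.mp h) ▸ one 6 (by simp)
    · refine hlines {8,11,12} (by simp [mLines]) fun x hx => ?_
      rcases hx with h|h|h
      · exact h ▸ one 5 (by simp)
      · exact h ▸ one 2 (by simp)
      · exact (Set.mem_singleton_iff.mp h) ▸ one 6 (by simp)
  · rintro ⟨h3, hIn⟩
    refine ⟨⟨?_, ?_, ?_⟩, hsubE⟩
    · rw [hIcard]; exact h3.trans (by norm_num)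
    · -- no mLine contained
      have pull : ∀ j : Fin 7, emb j ∈ emb '' I → j ∈ I := by
        rintro j ⟨i, hiI, hie⟩; rwa [emb_inj hie] at hiI
      intro L hL hsub
      have hout : ∀ x : Fin 13, x ∈ L → x ∈ Set.univ \ ({0,1,2,3,4,5} : Set (Fin 13)) :=
        fun x hx => hsubE (hsub hx)
      rcases hL with h|h|h|h|h|h|h|h|h|h|h|h|h|h|h <;> subst h
      · exact absurd (hout 0 (by simp)) (by decide)
      · exact absurd (hout 0 (by simp)) (by decide)
      · exact absurd (hout 0 (by simp)) (by decide)
      · -- {8,9,10} = emb '' {5,0,1}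
        refine key h3 hIn (show ({0,1,5} : Set (Fin 7)) ∈ nonFanoLines by simp [nonFanoLines]) ?_
        intro x hx
        rcases hx with h|h|h
        · exact h ▸ pull 0 (hsub (by decide))
        · exact h ▸ pull 1 (hsub (by decide))
        · exact (Set.mem_singleton_iff.mp h) ▸ pull 5 (hsub (by decide))
      · -- {7,10,11} = emb '' {3,1,2}
        refine key h3 hIn (show ({1,2,3} : Set (Fin 7)) ∈ nonFanoLines by simp [nonFanoLines]) ?_
        intro x hx
        rcases hx with h|h|h
        · exact h ▸ pull 1 (hsub (by decide))
        · exact h ▸ pull 2 (hsub (by decide))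
        · exact (Set.mem_singleton_iff.mp h) ▸ pull 3 (hsub (by decide))
      · exact absurd (hout 1 (by simp)) (by decide)
      · exact absurd (hout 1 (by simp)) (by decide)
      · exact absurd (hout 1 (by simp)) (by decide)
      · -- {6,9,11} = emb '' {4,0,2}
        refine key h3 hIn (show ({0,2,4} : Set (Fin 7)) ∈ nonFanoLines by simp [nonFanoLines]) ?_
        intro x hx
        rcases hx with h|h|h
        · exact h ▸ pull 0 (hsub (by decide))
        · exact h ▸ pull 2 (hsub (by decide))
        · exact (Set.mem_singleton_iff.mp h) ▸ pull 4 (hsub (by decide))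
      · -- {6,10,12} = emb '' {4,1,6}
        refine key h3 hIn (show ({1,4,6} : Set (Fin 7)) ∈ nonFanoLines by simp [nonFanoLines]) ?_
        intro x hx
        rcases hx with h|h|h
        · exact h ▸ pull 1 (hsub (by decide))
        · exact h ▸ pull 4 (hsub (by decide))
        · exact (Set.mem_singleton_iff.mp h) ▸ pull 6 (hsub (by decide))
      · exact absurd (hout 2 (by simp)) (by decide)
      · exact absurd (hout 2 (by simp)) (by decide)
      · exact absurd (hout 2 (by simp)) (by decide)
      · -- {7,9,12} = emb '' {3,0,6}
        refine key h3 hIn (show ({0,3,6} : Set (Fin 7)) ∈ nonFanoLines by simp [nonFanoLines]) ?_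
        intro x hx
        rcases hx with h|h|h
        · exact h ▸ pull 0 (hsub (by decide))
        · exact h ▸ pull 3 (hsub (by decide))
        · exact (Set.mem_singleton_iff.mp h) ▸ pull 6 (hsub (by decide))
      · -- {8,11,12} = emb '' {5,2,6}
        refine key h3 hIn (show ({2,5,6} : Set (Fin 7)) ∈ nonFanoLines by simp [nonFanoLines]) ?_
        intro x hx
        rcases hx with h|h|h
        · exact h ▸ pull 2 (hsub (by decide))
        · exact h ▸ pull 5 (hsub (by decide))
        · exact (Set.mem_singleton_iff.mp h) ▸ pull 6 (hsub (by decide))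
    · rintro ⟨Z, hZ, -, hcard⟩
      rw [hIcard] at hcard
      rw [hcard] at h3
      exact absurd h3 (by decide)
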